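/- Let D(z,λ) = h₀(λ) + ∑_{i=1}^d (z_i + z_i⁻¹)·h_i(λ) be a minimally sparse dispersion polynomial. Then at least one of the following holds: (1) there exists λ₀ ∈ ℂ with h_i(λ₀) = 0 for every i = 0,1,…,d (the dispersion relation has a flat band); (2) there exist a nonempty proper subset I ⊊ {1,…,d}, signs ε_j ∈ {−1,1} for j ∉ I, and λ₀ ∈ ℂ such that h_i(λ₀) = 0 for all i ∈ I and h₀(λ₀) + ∑_{j∉I} 2·ε_j·h_j(λ₀) = 0 (a coordinate projection has a flat band); (3) every critical point (x,λ₀) of D has x a corner point. -/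
import Mathlib


/-- The minimally sparse dispersion polynomial
`D(z,λ) = h₀(λ) + ∑_{i=1}^d (z_i + z_i⁻¹)·h_i(λ)`. -/
noncomputable def Dms (d : ℕ) (h0 : Polynomial ℂ) (h : Fin d → Polynomial ℂ)
    (z : Fin d → ℂ) (lam : ℂ) : ℂ :=
  Polynomial.eval lam h0 + ∑ i, (z i + (z i)⁻¹) * Polynomial.eval lam (h i)

/-- Trichotomy for minimally sparse dispersion polynomials:
(1) a flat band; or (2) a coordinate projection has a flat band; or
(3) every critical point of `D` occurs at a corner point. -/
theorem stmt_0 (d : ℕ) (hd : 1 ≤ d) (h0 : Polynomial ℂ) (h : Fin d → Polynomial ℂ) :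
    -- (1) the dispersion relation has a flat band
    (∃ lam0 : ℂ, Polynomial.eval lam0 h0 = 0 ∧ ∀ i, Polynomial.eval lam0 (h i) = 0) ∨
    -- (2) a coordinate projection has a flat band
    (∃ (I : Finset (Fin d)) (ε : Fin d → ℂ) (lam0 : ℂ),
      I.Nonempty ∧ I ≠ Finset.univ ∧
      (∀ j ∉ I, ε j = 1 ∨ ε j = -1) ∧
      (∀ i ∈ I, Polynomial.eval lam0 (h i) = 0) ∧
      Polynomial.eval lam0 h0 + ∑ j ∈ Iᶜ, 2 * ε j * Polynomial.eval lam0 (h j) = 0) ∨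
    -- (3) every critical point (x, λ₀) of D has x a corner point
    (∀ (x : Fin d → ℂ) (lam0 : ℂ), (∀ i, x i ≠ 0) →
      Dms d h0 h x lam0 = 0 →
      (∀ i, deriv (fun t => Dms d h0 h (Function.update x i t) lam0) (x i) = 0) →
      ∀ i, (x i) ^ 2 = 1) := by
  by_cases h3 : (∀ (x : Fin d → ℂ) (lam0 : ℂ), (∀ i, x i ≠ 0) →
      Dms d h0 h x lam0 = 0 →
      (∀ i, deriv (fun t => Dms d h0 h (Function.update x i t) lam0) (x i) = 0) →
      ∀ i, (x i) ^ 2 = 1)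
  · exact Or.inr (Or.inr h3)
  push_neg at h3
  obtain ⟨x, lam0, hx, hD, hderiv, i0, hi0⟩ := h3
  -- key: if x i ^ 2 ≠ 1 then (h i).eval lam0 = 0
  have key : ∀ i, (x i) ^ 2 ≠ 1 → Polynomial.eval lam0 (h i) = 0 := by
    intro i hne
    have hderiv_i := hderiv i
    have ha := hx i
    have hfun : (fun t => Dms d h0 h (Function.update x i t) lam0)
        = fun t => (t + t⁻¹) * Polynomial.eval lam0 (h i) +
          (Polynomial.eval lam0 h0 +
            ∑ j ∈ Finset.univ.erase i, (x j + (x j)⁻¹) * Polynomial.eval lam0 (h j)) := by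
      funext t
      unfold Dms
      rw [← Finset.add_sum_erase _ _ (Finset.mem_univ i)]
      rw [Finset.sum_congr rfl (fun j hj => by
        rw [Function.update_of_ne (Finset.ne_of_mem_erase hj)])]
      simp only [Function.update_self]
      ring
    rw [hfun] at hderiv_i
    have H : HasDerivAt (fun t : ℂ => (t + t⁻¹) * Polynomial.eval lam0 (h i) +
          (Polynomial.eval lam0 h0 +
            ∑ j ∈ Finset.univ.erase i, (x j + (x j)⁻¹) * Polynomial.eval lam0 (h j)))
        ((1 + -((x i) ^ 2)⁻¹) * Polynomial.eval lam0 (h i)) (x i) :=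
      (((hasDerivAt_id (x i)).add (hasDerivAt_inv ha)).mul_const _).add_const _
    rw [H.deriv] at hderiv_i
    have hc : (1 + -((x i) ^ 2)⁻¹) ≠ 0 := by
      intro hc
      apply hne
      have h2 : ((x i) ^ 2)⁻¹ = 1 := by linear_combination -hc
      exact inv_eq_one.mp h2
    rcases mul_eq_zero.mp hderiv_i with hc' | he
    · exact absurd hc' hc
    · exact he
  classical
  set I : Finset (Fin d) := Finset.univ.filter (fun i => (x i) ^ 2 ≠ 1) with hIdef
  have hmemI : ∀ i, i ∈ I ↔ (x i) ^ 2 ≠ 1 := by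
    intro i; simp [hIdef]
  have hI0 : i0 ∈ I := (hmemI i0).mpr hi0
  by_cases hIu : I = Finset.univ
  · -- case (1)
    left
    have hall : ∀ i, Polynomial.eval lam0 (h i) = 0 := by
      intro i
      exact key i ((hmemI i).mp (hIu ▸ Finset.mem_univ i))
    refine ⟨lam0, ?_, hall⟩
    have : Dms d h0 h x lam0 = Polynomial.eval lam0 h0 := by
      unfold Dms
      simp [hall]
    rw [this] at hD
    exact hD
  · -- case (2)
    right; left
    refine ⟨I, x, lam0, ⟨i0, hI0⟩, hIu, ?_, ?_, ?_⟩
    · intro j hj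
      have hsq : (x j) ^ 2 = 1 := by
        by_contra hne
        exact hj ((hmemI j).mpr hne)
      have : (x j - 1) * (x j + 1) = 0 := by linear_combination hsq
      rcases mul_eq_zero.mp this with h1 | h2
      · left; exact sub_eq_zero.mp h1
      · right; exact eq_neg_of_add_eq_zero_left h2
    · intro i hi
      exact key i ((hmemI i).mp hi)
    · have hterm : ∀ j ∈ Iᶜ, 2 * x j * Polynomial.eval lam0 (h j)
          = (x j + (x j)⁻¹) * Polynomial.eval lam0 (h j) := by
        intro j hj
        have hsq : (x j) ^ 2 = 1 := by
          by_contra hne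
          exact (Finset.mem_compl.mp hj) ((hmemI j).mpr hne)
        have hinv : (x j)⁻¹ = x j := by
          rw [inv_eq_of_mul_eq_one_right]
          rw [← sq]; exact hsq
        rw [hinv]; ring
      rw [Finset.sum_congr rfl hterm]
      have hsplit : ∑ j, (x j + (x j)⁻¹) * Polynomial.eval lam0 (h j)
          = ∑ j ∈ Iᶜ, (x j + (x j)⁻¹) * Polynomial.eval lam0 (h j) := by
        have hzero : ∑ j ∈ I, (x j + (x j)⁻¹) * Polynomial.eval lam0 (h j) = 0 :=
          Finset.sum_eq_zero (fun i hi => by rw [key i ((hmemI i).mp hi), mul_zero])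
        rw [← Finset.sum_compl_add_sum I, hzero, add_zero]
      calc Polynomial.eval lam0 h0 + ∑ j ∈ Iᶜ, (x j + (x j)⁻¹) * Polynomial.eval lam0 (h j)
          = Polynomial.eval lam0 h0 + ∑ j, (x j + (x j)⁻¹) * Polynomial.eval lam0 (h j) := by
            rw [hsplit]
        _ = Dms d h0 h x lam0 := rfl
        _ = 0 := hD
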